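/- Let K be a field, G a group, and H a subgroup of G of finite index n, where n is invertible in K (for instance char K = 0). Let V be a K-linear representation of G whose restriction to H is a semisimple representation of H. Then V is a semisimple representation of G. -/

import Mathlib

open MonoidAlgebra

section Aux
variable {K : Type*} [Field K] {G : Type*} [Group G] {H : Subgroup G}
  {V : Type*} [AddCommGroup V] [Module K V] {ρ : Representation K G V}

lemma aux_comp_subtype (s : MonoidAlgebra K ↥H) :
    Representation.asAlgebraHom (ρ.comp H.subtype : Representation K ↥H V) s
      = ρ.asAlgebraHom (MonoidAlgebra.mapDomain H.subtype s) := by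
  induction s using MonoidAlgebra.induction with
  | zero => simp
  | single_add g r s hg hr ih =>
      rw [MonoidAlgebra.mapDomain_add, map_add, map_add, ih, MonoidAlgebra.mapDomain_single,
        Representation.asAlgebraHom_single, Representation.asAlgebraHom_single]
      rfl

lemma aux_symm_alg (r : MonoidAlgebra K G) (y : ρ.asModule) :
    ρ.asModuleEquiv.symm (ρ.asAlgebraHom r (ρ.asModuleEquiv y)) = r • y := by
  apply ρ.asModuleEquiv.injective
  simp [Representation.asModuleEquiv_map_smul]

end Aux

theorem semisimple_of_restriction_semisimple
    (K : Type*) [Field K] (G : Type*) [Group G] (H : Subgroup G)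
    [H.FiniteIndex] (hn : (H.index : K) ≠ 0)
    (V : Type*) [AddCommGroup V] [Module K V]
    (ρ : Representation K G V)
    (h : IsSemisimpleModule (MonoidAlgebra K ↥H) (Representation.asModule (ρ.comp H.subtype))) :
    IsSemisimpleModule (MonoidAlgebra K G) ρ.asModule := by
  classical
  haveI : Fintype (G ⧸ H) := Fintype.ofFinite _
  set ρH : Representation K ↥H V := (ρ.comp H.subtype : Representation K ↥H V) with hρH
  have h' : IsSemisimpleModule (MonoidAlgebra K ↥H) ρH.asModule := h
  set e := ρ.asModuleEquiv with he
  set eH := Representation.asModuleEquiv ρH with heH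
  rw [isSemisimpleModule_iff]
  constructor
  intro p
  -- the corresponding K[H]-submodule
  let p' : Submodule (MonoidAlgebra K ↥H) ρH.asModule :=
    { carrier := {x | e.symm (eH x) ∈ p}
      add_mem' := by
        intro a b ha hb
        simp only [Set.mem_setOf_eq, map_add] at *
        exact p.add_mem ha hb
      zero_mem' := by simp
      smul_mem' := by
        intro s x hx
        have hx' : ρ.asModuleEquiv.symm (Representation.asModuleEquiv ρH x) ∈ p := hx
        show ρ.asModuleEquiv.symm (Representation.asModuleEquiv ρH (s • x)) ∈ p
        rw [Representation.asModuleEquiv_map_smul]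
        have h3 : Representation.asAlgebraHom ρH s
            = ρ.asAlgebraHom (MonoidAlgebra.mapDomain H.subtype s) := aux_comp_subtype s
        have h2 := aux_symm_alg (ρ := ρ) (MonoidAlgebra.mapDomain H.subtype s)
          (ρ.asModuleEquiv.symm (Representation.asModuleEquiv ρH x))
        rw [LinearEquiv.apply_symm_apply] at h2
        rw [h3, h2]
        exact p.smul_mem _ hx' }
  obtain ⟨q', hc⟩ := h'.exists_isCompl p'
  set π : ρH.asModule →ₗ[MonoidAlgebra K ↥H] ρH.asModule :=
    p'.subtype ∘ₗ (p'.linearProjOfIsCompl q' hc) with hπ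
  have hπmem : ∀ x, π x ∈ p' := fun x => (p'.linearProjOfIsCompl q' hc x).2
  have hπid : ∀ x, x ∈ p' → π x = x := by
    intro x hx
    have := Submodule.linearProjOfIsCompl_apply_left hc ⟨x, hx⟩
    exact congrArg (Subtype.val) this
  -- the projection as a map on V
  set πV : V → V := fun v => eH (π (eH.symm v)) with hπV
  have hπV_add : ∀ a b, πV (a + b) = πV a + πV b := by
    intro a b; simp [hπV, map_add]
  have hπV_smulK : ∀ (k : K) (v : V), πV (k • v) = k • πV v := by
    intro k v
    show eH (π (eH.symm (k • v))) = k • eH (π (eH.symm v))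
    rw [Representation.asModuleEquiv_symm_map_smul, map_smul,
      Representation.asModuleEquiv_map_smul, AlgHom.commutes]
    simp [Module.algebraMap_end_apply]
    rfl
  have hπV_H : ∀ (t : ↥H) (v : V), πV (ρ ↑t v) = ρ ↑t (πV v) := by
    intro t v
    show eH (π (eH.symm (ρH t v))) = ρ ↑t (eH (π (eH.symm v)))
    rw [Representation.asModuleEquiv_symm_map_rho, map_smul,
      Representation.asModuleEquiv_map_smul, Representation.asAlgebraHom_of]
    rfl
  have hπV_mem : ∀ v, e.symm (πV v) ∈ p := fun v => hπmem (eH.symm v)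
  have hπV_id : ∀ v, e.symm v ∈ p → πV v = v := by
    intro v hv
    have hx : eH.symm v ∈ p' := by
      show e.symm (eH (eH.symm v)) ∈ p
      rw [eH.apply_symm_apply]; exact hv
    show eH (π (eH.symm v)) = v
    rw [hπid _ hx, eH.apply_symm_apply]
  -- averaging
  set f : G → V → V := fun g v => ρ g (πV (ρ g⁻¹ v)) with hf
  have key : ∀ (g : G) (t : ↥H) (w : V), f (g * ↑t) w = f g w := by
    intro g t w
    simp only [hf]
    rw [mul_inv_rev, map_mul, map_mul, Module.End.mul_apply, Module.End.mul_apply,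
      show ((t : G))⁻¹ = ((t⁻¹ : ↥H) : G) from rfl, hπV_H]
    congr 1
    rw [← Module.End.mul_apply, ← map_mul]
    norm_num
  have hf_wd : ∀ (a b : G), (QuotientGroup.leftRel H).r a b → f a = f b := by
    intro a b hab
    replace hab : a⁻¹ * b ∈ H := QuotientGroup.leftRel_apply.mp hab
    funext v
    have hb : b = a * ((⟨a⁻¹ * b, hab⟩ : ↥H) : G) := by simp
    rw [hb, key]
  set T : G ⧸ H → V → V := fun c => Quotient.liftOn' c f hf_wd with hT
  have hT_mk : ∀ g : G, T (QuotientGroup.mk g) = f g := fun g => rfl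
  have hT_mem : ∀ c v, e.symm (T c v) ∈ p := by
    intro c v
    obtain ⟨g, rfl⟩ := QuotientGroup.mk_surjective c
    rw [hT_mk]
    simp only [hf]
    rw [Representation.asModuleEquiv_symm_map_rho]
    exact p.smul_mem _ (hπV_mem _)
  have hT_id : ∀ c v, e.symm v ∈ p → T c v = v := by
    intro c v hv
    obtain ⟨g, rfl⟩ := QuotientGroup.mk_surjective c
    rw [hT_mk]
    simp only [hf]
    have : e.symm (ρ g⁻¹ v) ∈ p := by
      rw [Representation.asModuleEquiv_symm_map_rho]
      exact p.smul_mem _ hv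
    rw [hπV_id _ this, ← Module.End.mul_apply, ← map_mul]
    simp
  have hT_add : ∀ c a b, T c (a + b) = T c a + T c b := by
    intro c a b
    obtain ⟨g, rfl⟩ := QuotientGroup.mk_surjective c
    simp [hT_mk, hf, hπV_add, map_add]
  have hT_smulK : ∀ c (k : K) v, T c (k • v) = k • T c v := by
    intro c k v
    obtain ⟨g, rfl⟩ := QuotientGroup.mk_surjective c
    simp [hT_mk, hf, hπV_smulK, map_smul]
  have hT_equiv : ∀ (s : G) (c : G ⧸ H) v, T (s • c) (ρ s v) = ρ s (T c v) := by
    intro s c v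
    obtain ⟨g, rfl⟩ := QuotientGroup.mk_surjective c
    have hmk : s • (QuotientGroup.mk g : G ⧸ H) = QuotientGroup.mk (s * g) := rfl
    rw [hmk, hT_mk, hT_mk]
    simp only [hf]
    have h1 : ρ (s * g)⁻¹ (ρ s v) = ρ g⁻¹ v := by
      rw [← Module.End.mul_apply, ← map_mul, mul_inv_rev, mul_assoc, inv_mul_cancel, mul_one]
    rw [h1, map_mul, Module.End.mul_apply]
  set Pf : V → V := fun v => (H.index : K)⁻¹ • ∑ c : G ⧸ H, T c v with hPf
  have hPf_add : ∀ a b, Pf (a + b) = Pf a + Pf b := by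
    intro a b
    simp only [hPf]
    rw [← smul_add, ← Finset.sum_add_distrib]
    congr 1
    exact Finset.sum_congr rfl fun c _ => hT_add c a b
  have hPf_smulK : ∀ (k : K) v, Pf (k • v) = k • Pf v := by
    intro k v
    simp only [hPf]
    rw [smul_comm]
    congr 1
    rw [Finset.smul_sum]
    exact Finset.sum_congr rfl fun c _ => hT_smulK c k v
  have hPf_equiv : ∀ (s : G) v, Pf (ρ s v) = ρ s (Pf v) := by
    intro s v
    simp only [hPf]
    rw [map_smul]
    congr 1
    rw [map_sum]
    refine (Fintype.sum_equiv (MulAction.toPerm s) _ _ fun c => ?_).symm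
    exact (hT_equiv s c v).symm
  have hPf_mem : ∀ v, e.symm (Pf v) ∈ p := by
    intro v
    simp only [hPf]
    rw [Representation.asModuleEquiv_symm_map_smul]
    refine p.smul_mem _ ?_
    rw [map_sum]
    exact p.sum_mem fun c _ => hT_mem c v
  have hPf_id : ∀ v, e.symm v ∈ p → Pf v = v := by
    intro v hv
    simp only [hPf]
    rw [Finset.sum_congr rfl fun c _ => hT_id c v hv, Finset.sum_const, Finset.card_univ,
      ← Nat.card_eq_fintype_card, ← Subgroup.index_eq_card, ← Nat.cast_smul_eq_nsmul K,
      smul_smul, inv_mul_cancel₀ hn, one_smul]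
  -- package as a K[G]-linear map
  set P : ρ.asModule →ₗ[MonoidAlgebra K G] ρ.asModule :=
    { toFun := fun x => e.symm (Pf (e x))
      map_add' := by intro a b; simp [map_add, hPf_add]
      map_smul' := by
        intro r x
        simp only [RingHom.id_apply]
        have hPf0 : Pf (0 : V) = 0 := by simpa using hPf_smulK 0 0
        induction r using MonoidAlgebra.induction with
        | zero => simp [hPf0]
        | single_add g k s hg hk ih =>
            have h1 : ρ.asModuleEquiv ((MonoidAlgebra.single g k) • x)
                = k • ρ g (ρ.asModuleEquiv x) := by
              rw [Representation.asModuleEquiv_map_smul, Representation.asAlgebraHom_single]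
              rfl
            have h2 : Pf (k • ρ g (ρ.asModuleEquiv x)) = k • ρ g (Pf (ρ.asModuleEquiv x)) := by
              rw [hPf_smulK, hPf_equiv]
            have h3 : ρ.asModuleEquiv.symm (k • ρ g (Pf (ρ.asModuleEquiv x)))
                = (MonoidAlgebra.single g k)
                    • ρ.asModuleEquiv.symm (Pf (ρ.asModuleEquiv x)) := by
              rw [Representation.asModuleEquiv_symm_map_smul,
                Representation.asModuleEquiv_symm_map_rho, smul_smul]
              congr 1
              exact (MonoidAlgebra.single_eq_algebraMap_mul_of g k).symm
            rw [add_smul, map_add, hPf_add, map_add, ih, h1, h2, h3, add_smul] } with hP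
  have hPmem : ∀ x, P x ∈ p := fun x => hPf_mem (e x)
  have hPid : ∀ x : p, P ↑x = ↑x := by
    intro x
    show e.symm (Pf (e ↑x)) = ↑x
    rw [hPf_id _ (by rw [e.symm_apply_apply]; exact x.2), e.symm_apply_apply]
  exact ⟨LinearMap.ker (P.codRestrict p hPmem),
    LinearMap.isCompl_of_proj (f := P.codRestrict p hPmem)
      (fun x => Subtype.ext (by simpa using hPid x))⟩
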